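/- arXiv:2209.07369 — 2 statements merged into one kernel-verified Lean document; each statement's English description precedes it below -/
import Mathlib

section
/- Rado's Selection Principle: Let $I$ be an arbitrary index set and $\{X_i : i \in I\}$ a family of non-empty finite sets. For each finite subset $A \subseteq I$, let $f_A : A \to \bigcup_i X_i$ be a choice function with $f_A(i) \in X_i$ for each $i \in A$. Then there exists a function $f : I \to \bigcup_i X_i$ with $f(i) \in X_i$ for all $i$, such that for every finite subset $A \subseteq I$ there exists a finite set $B$ with $A \subseteq B \subseteq I$ and $f(i) = f_B(i)$ for each $i \in A$. -/
/-- **Rado's Selection Principle.** Given a family of non-empty finite sets `X i` indexed by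
an arbitrary index set `I`, and for each finite subset `A ⊆ I` a choice function `f A` with
`f A i ∈ X i` for `i ∈ A`, there is a global choice function `g` with `g i ∈ X i` for all `i`,
such that every finite `A ⊆ I` is contained in a finite `B ⊆ I` with `g i = f B i` on `A`. -/
theorem rado_selection_principle {I α : Type*} (X : I → Finset α)
    (hX : ∀ i, (X i).Nonempty) (f : Finset I → I → α)
    (hf : ∀ A : Finset I, ∀ i ∈ A, f A i ∈ X i) :
    ∃ g : I → α, (∀ i, g i ∈ X i) ∧
      ∀ A : Finset I, ∃ B : Finset I, A ⊆ B ∧ ∀ i ∈ A, g i = f B i := by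
  classical
  let U : Ultrafilter (Finset I) := Ultrafilter.of Filter.atTop
  have hU : (U : Filter (Finset I)) ≤ Filter.atTop := Ultrafilter.of_le _
  have hmem : ∀ A : Finset I, {B : Finset I | A ⊆ B} ∈ U := by
    intro A
    apply hU
    exact Filter.mem_atTop_sets.2 ⟨A, fun B hB => hB⟩
  have key : ∀ i, ∃ x ∈ X i, {B : Finset I | i ∈ B ∧ f B i = x} ∈ U := by
    intro i
    have h1 : {B : Finset I | i ∈ B} ∈ U := by
      have := hmem {i}
      simpa [Finset.singleton_subset_iff] using this
    have h2 : {B : Finset I | i ∈ B} ⊆ ⋃ x ∈ (X i : Set α), {B : Finset I | i ∈ B ∧ f B i = x} := by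
      intro B hB
      exact Set.mem_biUnion (hf B i hB) ⟨hB, rfl⟩
    have h3 : (⋃ x ∈ (X i : Set α), {B : Finset I | i ∈ B ∧ f B i = x}) ∈ U :=
      U.sets_of_superset h1 h2
    rcases (Ultrafilter.finite_biUnion_mem_iff (X i).finite_toSet).1 h3 with ⟨x, hx, hxU⟩
    exact ⟨x, hx, hxU⟩
  choose g hg hgU using key
  refine ⟨g, hg, fun A => ?_⟩
  have hA : ({B : Finset I | A ⊆ B} ∩ ⋂ i ∈ (A : Set I), {B : Finset I | i ∈ B ∧ f B i = g i}) ∈ U := by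
    apply Filter.inter_mem (hmem A)
    exact (Filter.biInter_mem A.finite_toSet).2 fun i hi => hgU i
  rcases Filter.nonempty_of_mem hA with ⟨B, hB1, hB2⟩
  refine ⟨B, hB1, fun i hi => ?_⟩
  have := Set.mem_iInter₂.1 hB2 i hi
  exact this.2.symm
end

section
/- Let $\mathcal{O}$ be an orientation of the global one-inclusion graph $G_{\mathcal{H}}^{\mathcal{U}}=(V_n,E_n)$ and let $\mathbb{A}_{\mathcal{O}}$ be the induced learner (Algorithm 1). Then for every vertex $S = \{(x_1,y_1),\dots,(x_n,y_n)\} \in V_n$, the leave-one-out robust error satisfies $\frac{1}{n}\sum_{i=1}^n \mathbf{1}[\exists z \in \mathcal{U}(x_i): \mathbb{A}_{\mathcal{O}}(S\setminus\{(x_i,y_i)\})(z) \neq y_i] \leq \frac{\mathrm{adv\text{-}outdeg}(S;\mathcal{O})}{n}$. -/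
open scoped Classical

/-- A vertex of the global one-inclusion graph `G^𝒰_ℋ = (Vₙ, Eₙ)`: a multiset of `n` labeled
examples that is robustly realizable by `ℋ` w.r.t. `𝒰`. -/
def IsVertex {X : Type*} (H : Set (X → Bool)) (U : X → Set X) (n : ℕ)
    (v : Multiset (X × Bool)) : Prop :=
  Multiset.card v = n ∧ ∃ h ∈ H, ∀ p ∈ v, ∀ z ∈ U p.1, h z = p.2

/-- An edge of the global one-inclusion graph, labeled by a witness perturbation `z`. -/
def IsEdge {X : Type*} (H : Set (X → Bool)) (U : X → Set X) (n : ℕ)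
    (v u : Multiset (X × Bool)) (z : X) : Prop :=
  IsVertex H U n v ∧ IsVertex H U n u ∧
    ∃ x y x' y', y ≠ y' ∧ v - u = ({(x, y)} : Multiset (X × Bool)) ∧
      u - v = ({(x', y')} : Multiset (X × Bool)) ∧ z ∈ U x ∧ z ∈ U x'

/-- Adversarial out-degree of a vertex `v` under an orientation `O` of the global
one-inclusion graph: the number of elements `(x,y) ∈ v` witnessing an edge at `v` directed
away from `v`. -/
noncomputable def advOutdeg {X : Type*} (H : Set (X → Bool)) (U : X → Set X) (n : ℕ)
    (O : Multiset (X × Bool) × Multiset (X × Bool) × X → Multiset (X × Bool))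
    (v : Multiset (X × Bool)) : ℕ :=
  Multiset.card (v.filter fun p => ∃ u z,
    IsEdge H U n v u z ∧ p ∈ (v - u) + (u - v) ∧ O (v, u, z) = u)

/-- The condition, for the learner induced by an orientation `O` (Algorithm 1), that label
`y` wins on test instance `z` given training multiset `S'`: some vertex of `P_y` has all its
edges (labeled `z`) to vertices of `P_{-y}` directed toward it. -/
def GoodLabel {X : Type*} (H : Set (X → Bool)) (U : X → Set X) (n : ℕ)
    (O : Multiset (X × Bool) × Multiset (X × Bool) × X → Multiset (X × Bool))
    (S' : Multiset (X × Bool)) (z : X) (y : Bool) : Prop :=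
  ∃ x, z ∈ U x ∧ IsVertex H U n (S' + {(x, y)}) ∧
    ∀ x', z ∈ U x' → IsVertex H U n (S' + {(x', !y)}) →
      O (S' + {(x, y)}, S' + {(x', !y)}, z) = S' + {(x, y)}

/-- The learner `𝔸_𝒪` induced by an orientation `O` (Algorithm 1): on training multiset `S'`
and test instance `z`, output the label `y` such that some vertex of `P_y` has all its edges
labeled `z` to `P_{-y}` directed toward it, if such a label exists; otherwise default to
`+1` (here `true`). -/
noncomputable def inducedLearner {X : Type*} (H : Set (X → Bool)) (U : X → Set X) (n : ℕ)
    (O : Multiset (X × Bool) × Multiset (X × Bool) × X → Multiset (X × Bool))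
    (S' : Multiset (X × Bool)) (z : X) : Bool :=
  if GoodLabel H U n O S' z true then true
  else if GoodLabel H U n O S' z false then false
  else true

lemma card_filter_ofFn {n : ℕ} {β : Type*} (e : Fin n → β) (p : β → Prop)
    [DecidablePred p] :
    (Finset.univ.filter fun i => p (e i)).card
      = Multiset.card (Multiset.filter p (↑(List.ofFn e) : Multiset β)) := by
  have h : (↑(List.ofFn e) : Multiset β) = Multiset.map e (Finset.univ : Finset (Fin n)).val := by
    rw [Fin.univ_def]
    simp [List.ofFn_eq_map]
  rw [h, Multiset.filter_map, Multiset.card_map]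
  rfl

/-- **Leave-one-out robust error of the induced learner.** Let `O` be an orientation of the
global one-inclusion graph (directing each edge to one of its endpoints, independently of the
order in which the endpoints are listed). For every vertex `S = {(x₁,y₁),…,(xₙ,yₙ)}`, the
average leave-one-out robust error of `𝔸_𝒪` is at most `advoutdeg(S; 𝒪)/n`. -/
theorem leave_one_out_error_le_advOutdeg {X : Type*} (H : Set (X → Bool)) (U : X → Set X)
    (n : ℕ)
    (O : Multiset (X × Bool) × Multiset (X × Bool) × X → Multiset (X × Bool))
    (hO : ∀ v u z, IsEdge H U n v u z →
      (O (v, u, z) = v ∨ O (v, u, z) = u) ∧ O (v, u, z) = O (u, v, z))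
    (e : Fin n → X × Bool)
    (hv : IsVertex H U n (↑(List.ofFn e) : Multiset (X × Bool))) :
    ((Finset.univ.filter fun i : Fin n => ∃ z ∈ U (e i).1,
        inducedLearner H U n O ((↑(List.ofFn e) : Multiset (X × Bool)).erase (e i)) z
          ≠ (e i).2).card : ℝ) / n
      ≤ (advOutdeg H U n O (↑(List.ofFn e) : Multiset (X × Bool)) : ℝ) / n := by
  set v : Multiset (X × Bool) := (↑(List.ofFn e) : Multiset (X × Bool)) with hvdef
  have hmem : ∀ i, e i ∈ v := by
    intro i
    simp [hvdef, List.mem_ofFn]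
  -- key: a bad index witnesses an outgoing edge
  have key : ∀ i : Fin n, (∃ z ∈ U (e i).1,
      inducedLearner H U n O (v.erase (e i)) z ≠ (e i).2) →
      (∃ u z, IsEdge H U n v u z ∧ e i ∈ (v - u) + (u - v) ∧ O (v, u, z) = u) := by
    intro i hbad
    by_contra hno
    obtain ⟨z, hz, hlearn⟩ := hbad
    apply hlearn
    set S' : Multiset (X × Bool) := v.erase (e i) with hS'
    have hSv : S' + {e i} = v := by
      rw [add_comm, Multiset.singleton_add, Multiset.cons_erase (hmem i)]
    have hne' : ∀ q : X × Bool, q.2 = !(e i).2 → (e i) ≠ q := by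
      intro q hq h
      rw [← h] at hq
      simp at hq
    have hsub : ∀ q : X × Bool, q.2 = !(e i).2 →
        v - (S' + {q}) = ({e i} : Multiset (X × Bool)) := by
      intro q hq
      rw [← hSv, add_tsub_add_eq_tsub_left, Multiset.sub_singleton,
        Multiset.erase_of_notMem (by simpa using fun h => hne' q hq h.symm)]
    -- any opposite-labeled extension gives an edge
    have hedge : ∀ q : X × Bool, q.2 = !(e i).2 → z ∈ U q.1 →
        IsVertex H U n (S' + {q}) → IsEdge H U n v (S' + {q}) z := by
      intro q hq hzq hvq
      have hsub2 : (S' + {q}) - v = ({q} : Multiset (X × Bool)) := by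
        rw [← hSv, add_tsub_add_eq_tsub_left, Multiset.sub_singleton,
          Multiset.erase_of_notMem (by simpa using hne' q hq)]
      exact ⟨hv, hvq, (e i).1, (e i).2, q.1, q.2,
        by rw [hq]; simp, by simpa using hsub q hq, by simpa using hsub2, hz, hzq⟩
    -- all edges from v (labeled z, to opposite extensions) point toward v
    have hall0 : ∀ x', z ∈ U x' → IsVertex H U n (S' + {(x', !(e i).2)}) →
        O (v, S' + {(x', !(e i).2)}, z) = v := by
      intro x' hzx' hvx'
      have hEdge := hedge (x', !(e i).2) rfl hzx' hvx'
      rcases (hO _ _ _ hEdge).1 with h | h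
      · exact h
      · refine absurd ⟨_, z, hEdge, ?_, h⟩ hno
        rw [hsub (x', !(e i).2) rfl]
        simp
    -- the vertex v itself shows GoodLabel (e i).2
    have hgood : GoodLabel H U n O S' z (e i).2 := by
      refine ⟨(e i).1, hz, by rw [Prod.mk.eta, hSv]; exact hv, ?_⟩
      intro x' hzx' hvx'
      rw [Prod.mk.eta, hSv]
      exact hall0 x' hzx' hvx'
    -- the opposite label is not good
    have hbad2 : ¬ GoodLabel H U n O S' z (!(e i).2) := by
      rintro ⟨x', hzx', hvx', hall⟩
      have h1 : O (v, S' + {(x', !(e i).2)}, z) = v := hall0 x' hzx' hvx'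
      have h2 : O (S' + {(x', !(e i).2)}, v, z) = S' + {(x', !(e i).2)} := by
        have := hall (e i).1 hz (by rw [Bool.not_not, Prod.mk.eta, hSv]; exact hv)
        rwa [Bool.not_not, Prod.mk.eta, hSv] at this
      have hEdge := hedge (x', !(e i).2) rfl hzx' hvx'
      have h3 := (hO _ _ _ hEdge).2
      rw [h1, h2] at h3
      have hcontra := hsub (x', !(e i).2) rfl
      rw [h3, tsub_self] at hcontra
      simp at hcontra
    -- conclude the learner predicts (e i).2
    unfold inducedLearner
    rcases hy : (e i).2 with _ | _
    · rw [hy] at hgood hbad2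
      simp only [Bool.not_false] at hbad2
      rw [if_neg hbad2, if_pos hgood]
    · rw [hy] at hgood
      rw [if_pos hgood]
  -- counting
  have hcount : (Finset.univ.filter fun i : Fin n => ∃ z ∈ U (e i).1,
      inducedLearner H U n O (v.erase (e i)) z ≠ (e i).2).card
      ≤ advOutdeg H U n O v := by
    have h1 : (Finset.univ.filter fun i : Fin n => ∃ z ∈ U (e i).1,
        inducedLearner H U n O (v.erase (e i)) z ≠ (e i).2).card
        ≤ (Finset.univ.filter fun i : Fin n => ∃ u z, IsEdge H U n v u z ∧
            e i ∈ (v - u) + (u - v) ∧ O (v, u, z) = u).card := by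
      apply Finset.card_le_card
      intro i hi
      simp only [Finset.mem_filter] at hi ⊢
      exact ⟨hi.1, key i hi.2⟩
    refine h1.trans_eq ?_
    exact card_filter_ofFn e (fun p => ∃ u z, IsEdge H U n v u z ∧
      p ∈ (v - u) + (u - v) ∧ O (v, u, z) = u)
  exact div_le_div_of_nonneg_right (by exact_mod_cast hcount) (Nat.cast_nonneg n)
end
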